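/- For every fuse-k-expression φ there exists a reduced glue-k-expression ξ whose value G^ξ is label-preservingly isomorphic to the value G^φ of φ. Here a glue-k-expression ξ is reduced if it contains no useless nodes and satisfies: (1) for every join subterm η_{i,j}(ψ) of ξ, the evaluated graph G^ψ contains no edge between a vertex of label i and a vertex of label j; (2) for every glue subterm ψ1 ⊔ ψ2 of ξ, the graphs G^{ψ1} and G^{ψ2} are edge-disjoint; (3) for every glue subterm ψ1 ⊔ ψ2 of ξ and every shared vertex v ∈ V(G^{ψ1}) ∩ V(G^{ψ2}), v has an incident edge in G^{ψ1} and an incident edge in G^{ψ2}. -/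

import Mathlib

/-! ### `k`-labeled graphs and the basic operations on them -/

/-- A `k`-labeled graph: a simple graph together with a labeling of its vertices
by labels from `Fin k`. -/
structure LGraph (k : ℕ) where
  V : Type
  G : SimpleGraph V
  lab : V → Fin k

namespace LGraph

variable {k : ℕ}

/-- The join operation `η_{a,b}`: add all edges between vertices of label `a`
and vertices of label `b`. -/
def join (a b : Fin k) (H : LGraph k) : LGraph k where
  V := H.V
  G :=
    { Adj := fun u v =>
        H.G.Adj u v ∨ (u ≠ v ∧ ((H.lab u = a ∧ H.lab v = b) ∨ (H.lab u = b ∧ H.lab v = a)))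
      symm := by
        constructor
        intro u v h
        rcases h with h | ⟨hne, h⟩
        · exact Or.inl (H.G.adj_symm h)
        · refine Or.inr ⟨hne.symm, ?_⟩
          rcases h with ⟨h1, h2⟩ | ⟨h1, h2⟩
          · exact Or.inr ⟨h2, h1⟩
          · exact Or.inl ⟨h2, h1⟩
      loopless := by
        constructor
        intro v h
        rcases h with h | ⟨hne, _⟩
        · exact H.G.loopless.irrefl v h
        · exact hne rfl }
  lab := H.lab

/-- The relabel operation `ρ_{a→b}`: every vertex of label `a` gets label `b` instead. -/
def relabel (a b : Fin k) (H : LGraph k) : LGraph k where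
  V := H.V
  G := H.G
  lab := fun v => if H.lab v = a then b else H.lab v

/-- The fuse operation `θ_i`: replace all vertices of label `i` by a single new vertex
(represented by `none`) of label `i` whose neighbourhood is the union of their
neighbourhoods. -/
def fuse (i : Fin k) (H : LGraph k) : LGraph k where
  V := Option {v : H.V // H.lab v ≠ i}
  G :=
    { Adj := fun x y =>
        match x, y with
        | some u, some v => H.G.Adj u.1 v.1
        | some u, none => ∃ w, H.lab w = i ∧ H.G.Adj u.1 w
        | none, some v => ∃ w, H.lab w = i ∧ H.G.Adj w v.1
        | none, none => False
      symm := by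
        constructor
        rintro (_ | u) (_ | v) h
        · exact h
        · obtain ⟨w, hw, ha⟩ := h
          exact ⟨w, hw, ha.symm⟩
        · obtain ⟨w, hw, ha⟩ := h
          exact ⟨w, hw, ha.symm⟩
        · exact H.G.adj_symm h
      loopless := by
        constructor
        rintro (_ | v) h
        · exact h
        · exact H.G.loopless.irrefl v.1 h }
  lab := fun x =>
    match x with
    | some u => H.lab u.1
    | none => i

/-- Disjoint union `H1 ⊕ H2` of two `k`-labeled graphs. -/
def union (H1 H2 : LGraph k) : LGraph k where
  V := H1.V ⊕ H2.V
  G := H1.G ⊕g H2.G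
  lab := Sum.elim H1.lab H2.lab

/-- Label-preserving isomorphism of `k`-labeled graphs. -/
def LIso (H1 H2 : LGraph k) : Prop :=
  ∃ e : H1.G ≃g H2.G, ∀ v, H2.lab (e v) = H1.lab v

/-- The occurrence of the join operator `η_{a,b}` applied to `H` is not useless,
i.e. it creates at least one new edge. -/
def joinUseful (a b : Fin k) (H : LGraph k) : Prop :=
  ∃ u v : H.V, u ≠ v ∧ H.lab u = a ∧ H.lab v = b ∧ ¬ H.G.Adj u v

/-- The occurrence of the fuse operator `θ_i` applied to `H` is not useless,
i.e. `H` has at least two vertices of label `i`. -/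
def fuseUseful (i : Fin k) (H : LGraph k) : Prop :=
  ∃ u v : H.V, u ≠ v ∧ H.lab u = i ∧ H.lab v = i

/-- The occurrence of a relabel operator `ρ_{a→b}` applied to `H` is not useless,
i.e. `H` has a vertex of label `a`. -/
def relabelUseful (a : Fin k) (H : LGraph k) : Prop :=
  ∃ v : H.V, H.lab v = a

/-- `relabelSeq i [a₁, …, a_q] H = ρ_{a₁→i}(⋯(ρ_{a_q→i}(H))⋯)`. -/
def relabelSeq (i : Fin k) : List (Fin k) → LGraph k → LGraph k
  | [], H => H
  | a :: as, H => relabel a i (relabelSeq i as H)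

/-- None of the relabel operators in `relabelSeq i as H` is useless (this includes
that none of them has the form `ρ_{a→a}`). -/
def relabelSeqUseful (i : Fin k) : List (Fin k) → LGraph k → Prop
  | [], _ => True
  | a :: as, H => relabelSeqUseful i as H ∧ a ≠ i ∧ relabelUseful a (relabelSeq i as H)

end LGraph

/-! ### Fuse-`k`-expressions -/

/-- A fuse-`k`-expression: introduce a vertex, disjoint union, join, relabel, fuse. -/
inductive FuseExpr (k : ℕ) where
  | intro (i : Fin k)
  | union (φ1 φ2 : FuseExpr k)
  | join (i j : Fin k) (φ : FuseExpr k)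
  | relabel (i j : Fin k) (φ : FuseExpr k)
  | fuse (i : Fin k) (φ : FuseExpr k)

namespace FuseExpr

variable {k : ℕ}

/-- The single-vertex `k`-labeled graph with label `i`. -/
def singleVertex (i : Fin k) : LGraph k := ⟨PUnit, ⊥, fun _ => i⟩

/-- The `k`-labeled graph `G^φ` obtained by evaluating a fuse-`k`-expression. -/
def eval : FuseExpr k → LGraph k
  | .intro i => singleVertex i
  | .union φ1 φ2 => LGraph.union φ1.eval φ2.eval
  | .join i j φ => LGraph.join i j φ.eval
  | .relabel i j φ => LGraph.relabel i j φ.eval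
  | .fuse i φ => LGraph.fuse i φ.eval

/-- Well-formedness of a fuse-`k`-expression: joins and relabels use two distinct labels,
and every fuse `θ_i` is applied to a graph having a vertex of label `i`. -/
def WF : FuseExpr k → Prop
  | .intro _ => True
  | .union φ1 φ2 => φ1.WF ∧ φ2.WF
  | .join i j φ => i ≠ j ∧ φ.WF
  | .relabel i j φ => i ≠ j ∧ φ.WF
  | .fuse i φ => φ.WF ∧ ∃ v, φ.eval.lab v = i

end FuseExpr

/-- A graph `G` admits a fuse-`k`-expression if some well-formed fuse-`k`-expression
evaluates to a labeled graph whose underlying simple graph is isomorphic to `G`. -/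
def FuseAdmits {V : Type} (k : ℕ) (G : SimpleGraph V) : Prop :=
  ∃ φ : FuseExpr k, φ.WF ∧ Nonempty (φ.eval.G ≃g G)

/-! ### Glue-`k`-expressions -/

/-- A `k`-labeled graph with titled vertices: vertices are natural-number titles
(titles determine vertex identity), together with a finite vertex set, a finite edge
set and a labeling (only meaningful on `verts`). -/
structure TGraph (k : ℕ) where
  verts : Finset ℕ
  edges : Finset (Sym2 ℕ)
  lab : ℕ → Fin k

/-- The underlying simple graph (on the vertex set) of a titled `k`-labeled graph. -/
def TGraph.toSG {k : ℕ} (T : TGraph k) : SimpleGraph {v // v ∈ T.verts} where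
  Adj u v := u ≠ v ∧ s(u.1, v.1) ∈ T.edges
  symm := by
    constructor
    intro u v h
    refine ⟨h.1.symm, ?_⟩
    rw [Sym2.eq_swap]
    exact h.2
  loopless := ⟨fun v h => h.1 rfl⟩

/-- Two titled `k`-labeled graphs are glueable: every shared vertex has the same label
in both graphs and is the unique vertex of its label in each of them. -/
def Glueable {k : ℕ} (T1 T2 : TGraph k) : Prop :=
  ∀ v ∈ T1.verts ∩ T2.verts,
    T1.lab v = T2.lab v ∧
    (∀ w ∈ T1.verts, T1.lab w = T1.lab v → w = v) ∧
    (∀ w ∈ T2.verts, T2.lab w = T2.lab v → w = v)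

/-- A glue-`k`-expression: introduce a titled vertex, join, relabel, glue. -/
inductive GlueExpr (k : ℕ) where
  | intro (v : ℕ) (i : Fin k)
  | join (i j : Fin k) (ξ : GlueExpr k)
  | relabel (i j : Fin k) (ξ : GlueExpr k)
  | glue (ξ1 ξ2 : GlueExpr k)

namespace GlueExpr

variable {k : ℕ}

/-- The titled `k`-labeled graph `G^ξ` obtained by evaluating a glue-`k`-expression. -/
def eval : GlueExpr k → TGraph k
  | .intro v i => ⟨{v}, ∅, fun _ => i⟩
  | .join i j ξ =>
      let T := ξ.eval
      ⟨T.verts,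
       T.edges ∪
         (((T.verts ×ˢ T.verts).filter
            (fun p => p.1 ≠ p.2 ∧ T.lab p.1 = i ∧ T.lab p.2 = j)).image
            (fun p => s(p.1, p.2))),
       T.lab⟩
  | .relabel i j ξ =>
      let T := ξ.eval
      ⟨T.verts, T.edges, fun v => if T.lab v = i then j else T.lab v⟩
  | .glue ξ1 ξ2 =>
      let T1 := ξ1.eval
      let T2 := ξ2.eval
      ⟨T1.verts ∪ T2.verts, T1.edges ∪ T2.edges,
       fun v => if v ∈ T1.verts then T1.lab v else T2.lab v⟩

/-- Well-formedness of a glue-`k`-expression: joins and relabels use two distinct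
labels, and every glue node is applied to two glueable graphs. -/
def WF : GlueExpr k → Prop
  | .intro _ _ => True
  | .join i j ξ => i ≠ j ∧ ξ.WF
  | .relabel i j ξ => i ≠ j ∧ ξ.WF
  | .glue ξ1 ξ2 => ξ1.WF ∧ ξ2.WF ∧ Glueable ξ1.eval ξ2.eval

/-- A glue-`k`-expression is *reduced* if it contains no useless nodes and moreover:
(1) no join `η_{i,j}` is applied to a graph already containing an edge between a
vertex of label `i` and a vertex of label `j`; (2) the two graphs at every glue node
are edge-disjoint; (3) every shared vertex at a glue node has an incident edge in both
glued graphs. -/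
def Reduced : GlueExpr k → Prop
  | .intro _ _ => True
  | .join i j ξ => ξ.Reduced ∧
      -- the join is not useless: it creates at least one new edge
      (∃ u ∈ ξ.eval.verts, ∃ v ∈ ξ.eval.verts,
        u ≠ v ∧ ξ.eval.lab u = i ∧ ξ.eval.lab v = j ∧ s(u, v) ∉ ξ.eval.edges) ∧
      -- property (1): no already existing edge between labels `i` and `j`
      (∀ u ∈ ξ.eval.verts, ∀ v ∈ ξ.eval.verts,
        ξ.eval.lab u = i → ξ.eval.lab v = j → s(u, v) ∉ ξ.eval.edges)
  | .relabel i _ ξ => ξ.Reduced ∧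
      -- the relabel is not useless: some vertex has label `i`
      (∃ v ∈ ξ.eval.verts, ξ.eval.lab v = i)
  | .glue ξ1 ξ2 => ξ1.Reduced ∧ ξ2.Reduced ∧
      -- property (2): the glued graphs are edge-disjoint
      ξ1.eval.edges ∩ ξ2.eval.edges = ∅ ∧
      -- property (3): every shared vertex has an incident edge on both sides
      (∀ v ∈ ξ1.eval.verts ∩ ξ2.eval.verts,
        (∃ e ∈ ξ1.eval.edges, v ∈ e) ∧ (∃ e ∈ ξ2.eval.edges, v ∈ e))

/-- The number of leaves (introduce nodes) of a glue-`k`-expression. -/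
def leafCount : GlueExpr k → ℕ
  | .intro _ _ => 1
  | .join _ _ ξ => ξ.leafCount
  | .relabel _ _ ξ => ξ.leafCount
  | .glue ξ1 ξ2 => ξ1.leafCount + ξ2.leafCount

/-- The number of nodes of the parse tree of a glue-`k`-expression. -/
def nodeCount : GlueExpr k → ℕ
  | .intro _ _ => 1
  | .join _ _ ξ => ξ.nodeCount + 1
  | .relabel _ _ ξ => ξ.nodeCount + 1
  | .glue ξ1 ξ2 => ξ1.nodeCount + ξ2.nodeCount + 1

end GlueExpr

/-- A titled `k`-labeled graph is label-preservingly isomorphic to a `k`-labeled graph. -/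
def TGraph.LIsoTo {k : ℕ} (T : TGraph k) (H : LGraph k) : Prop :=
  ∃ e : T.toSG ≃g H.G, ∀ v, H.lab (e v) = T.lab v.1

/-! ### Auxiliary development for the proof -/

namespace S13
open Classical

variable {k : ℕ}

theorem evalFinite (ψ : FuseExpr k) : Finite ψ.eval.V := by
  induction ψ with
  | intro i => exact inferInstanceAs (Finite PUnit.{1})
  | union ψ1 ψ2 ih1 ih2 =>
      haveI := ih1; haveI := ih2
      exact inferInstanceAs (Finite (ψ1.eval.V ⊕ ψ2.eval.V))
  | join i j ψ ih => exact ih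
  | relabel i j ψ ih => exact ih
  | fuse i ψ ih =>
      haveI := ih
      haveI : Finite {v : ψ.eval.V // ψ.eval.lab v ≠ i} := Subtype.finite
      exact Finite.of_equiv _ (Equiv.optionEquivSumPUnit.{0,0} {v : ψ.eval.V // ψ.eval.lab v ≠ i}).symm

theorem evalNonempty (ψ : FuseExpr k) : Nonempty ψ.eval.V := by
  induction ψ with
  | intro i => exact ⟨PUnit.unit⟩
  | union ψ1 ψ2 ih1 ih2 => exact ⟨Sum.inl ih1.some⟩
  | join i j ψ ih => exact ih
  | relabel i j ψ ih => exact ih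
  | fuse i ψ ih => exact ⟨none⟩

/-- A "surviving edge" of the titled quotient: a non-loop projected edge of `H`
that is not re-created later (`Fut`). -/
def Surv (H : LGraph k) (t : H.V → ℕ) (Fut : Set (Sym2 ℕ)) (e : Sym2 ℕ) : Prop :=
  e ∉ Fut ∧ ∃ u v, H.G.Adj u v ∧ t u ≠ t v ∧ e = s(t u, t v)

/-- Specification of the value of the glue expression produced for a subexpression
with value `H`, titling `t` and future edge set `Fut`. -/
structure Spec (H : LGraph k) (t : H.V → ℕ) (Fut : Set (Sym2 ℕ)) (T : TGraph k) : Prop where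
  edges : ∀ e, e ∈ T.edges ↔ Surv H t Fut e
  verts : ∀ a, a ∈ T.verts ↔ ∃ e ∈ T.edges, a ∈ e
  labs : ∀ a ∈ T.verts, ∃ u, t u = a ∧ H.lab u = T.lab a

/-- The result of the main construction: either there are no surviving edges at all
(and we produce no expression), or a reduced glue expression with the right value. -/
def Res (H : LGraph k) (t : H.V → ℕ) (Fut : Set (Sym2 ℕ)) : Option (GlueExpr k) → Prop
  | none => ∀ e, ¬ Surv H t Fut e
  | some ξ => ξ.WF ∧ ξ.Reduced ∧ Spec H t Fut ξ.eval

/-- Glue a list of fresh single vertices onto a glue expression. -/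
def addIntros : List (ℕ × Fin k) → GlueExpr k → GlueExpr k
  | [], ξ => ξ
  | p :: l, ξ => .glue (addIntros l ξ) (.intro p.1 p.2)

theorem addIntros_spec : ∀ (l : List (ℕ × Fin k)) (ξ : GlueExpr k),
    ξ.WF → ξ.Reduced → (∀ p ∈ l, p.1 ∉ ξ.eval.verts) → (l.map Prod.fst).Nodup →
    (addIntros l ξ).WF ∧ (addIntros l ξ).Reduced ∧
    (addIntros l ξ).eval.verts = ξ.eval.verts ∪ (l.map Prod.fst).toFinset ∧
    (addIntros l ξ).eval.edges = ξ.eval.edges ∧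
    (∀ a ∈ ξ.eval.verts, (addIntros l ξ).eval.lab a = ξ.eval.lab a) ∧
    (∀ p ∈ l, (addIntros l ξ).eval.lab p.1 = p.2) := by
  intro l
  induction l with
  | nil =>
      intro ξ hw hr _ _
      exact ⟨hw, hr, by simp [addIntros], rfl, fun a _ => rfl, by simp⟩
  | cons p l ih =>
      intro ξ hw hr hf hnd
      have hf' : ∀ q ∈ l, q.1 ∉ ξ.eval.verts := fun q hq => hf q (List.mem_cons_of_mem _ hq)
      have hnd' : (l.map Prod.fst).Nodup := (List.nodup_cons.mp hnd).2
      obtain ⟨w1, r1, v1, e1, lb1, lb2⟩ := ih ξ hw hr hf' hnd'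
      have hpv : p.1 ∉ (addIntros l ξ).eval.verts := by
        rw [v1]
        simp only [Finset.mem_union, List.mem_toFinset, List.mem_map, not_or]
        refine ⟨hf p (List.mem_cons_self), ?_⟩
        rintro ⟨q, hq, hq1⟩
        exact (List.nodup_cons.mp hnd).1 (hq1 ▸ List.mem_map_of_mem (f := Prod.fst) hq)
      have hverts : (addIntros (p :: l) ξ).eval.verts
          = (addIntros l ξ).eval.verts ∪ {p.1} := rfl
      have hedges : (addIntros (p :: l) ξ).eval.edges
          = (addIntros l ξ).eval.edges ∪ (∅ : Finset (Sym2 ℕ)) := rfl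
      have hlab : ∀ a, (addIntros (p :: l) ξ).eval.lab a
          = if a ∈ (addIntros l ξ).eval.verts then (addIntros l ξ).eval.lab a else p.2 :=
        fun a => rfl
      refine ⟨⟨w1, trivial, ?_⟩, ⟨r1, trivial, ?_, ?_⟩, ?_, ?_, ?_, ?_⟩
      · -- Glueable
        intro v hv
        exfalso
        simp only [GlueExpr.eval, Finset.mem_inter, Finset.mem_singleton] at hv
        exact hpv (hv.2 ▸ hv.1)
      · -- edge disjointness
        simp [GlueExpr.eval]
      · -- shared vertices
        intro v hv
        exfalso
        simp only [GlueExpr.eval, Finset.mem_inter, Finset.mem_singleton] at hv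
        exact hpv (hv.2 ▸ hv.1)
      · rw [hverts, v1]
        ext a
        simp only [Finset.mem_union, List.map_cons, List.toFinset_cons, Finset.mem_insert,
          List.mem_toFinset, Finset.mem_singleton]
        tauto
      · rw [hedges, Finset.union_empty, e1]
      · intro a ha
        rw [hlab, if_pos, lb1 a ha]
        rw [v1]
        exact Finset.mem_union_left _ ha
      · intro q hq
        rcases List.mem_cons.mp hq with rfl | hq
        · rw [hlab, if_neg hpv]
        · rw [hlab, if_pos, lb2 q hq]
          rw [v1]
          refine Finset.mem_union_right _ ?_
          simp only [List.mem_toFinset, List.mem_map]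
          exact ⟨q, hq, rfl⟩

/-- The total relabeling function effected by a list of relabels
(innermost = last element of the list). -/
def rl : List (Fin k × Fin k) → Fin k → Fin k
  | [], x => x
  | p :: l, x => if rl l x = p.1 then p.2 else rl l x

theorem rl_fix : ∀ (l : List (Fin k × Fin k)) (x : Fin k),
    (∀ q ∈ l, q.1 ≠ x ∧ q.2 ≠ x) → rl l x = x
  | [], x, _ => rfl
  | p :: l, x, h => by
    have h' := rl_fix l x (fun q hq => h q (List.mem_cons_of_mem _ hq))
    have := (h p (List.mem_cons_self)).1
    simp only [rl, h', if_neg (Ne.symm this)]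

theorem rl_mem : ∀ (l : List (Fin k × Fin k)) (c d : Fin k), (c, d) ∈ l →
    (l.map Prod.fst).Nodup → (∀ p ∈ l, ∀ q ∈ l, p.2 ≠ q.1) → rl l c = d
  | [], c, d, hm, _, _ => absurd hm List.not_mem_nil
  | p :: l, c, d, hm, hnd, hts => by
    rcases List.mem_cons.mp hm with rfl | hm'
    · -- head
      have h' : rl l c = c := by
        refine rl_fix l c (fun q hq => ⟨?_, ?_⟩)
        · intro hq1
          exact (List.nodup_cons.mp hnd).1 (List.mem_map.mpr ⟨q, hq, hq1⟩)
        · exact hts q (List.mem_cons_of_mem _ hq) (c, d) (List.mem_cons_self)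
      simp [rl, h']
    · have h' : rl l c = d :=
        rl_mem l c d hm' (List.nodup_cons.mp hnd).2
          (fun q hq q' hq' => hts q (List.mem_cons_of_mem _ hq) q' (List.mem_cons_of_mem _ hq'))
      have hd : d ≠ p.1 :=
        hts (c, d) (List.mem_cons_of_mem _ hm') p (List.mem_cons_self)
      simp only [rl, h', if_neg hd]

/-- Apply a list of relabels to a glue expression. -/
def addRelabels : List (Fin k × Fin k) → GlueExpr k → GlueExpr k
  | [], ξ => ξ
  | p :: l, ξ => .relabel p.1 p.2 (addRelabels l ξ)

theorem addRelabels_spec : ∀ (l : List (Fin k × Fin k)) (ξ : GlueExpr k),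
    ξ.WF → ξ.Reduced →
    (∀ p ∈ l, p.1 ≠ p.2) →
    (l.map Prod.fst).Nodup →
    (∀ p ∈ l, ∀ q ∈ l, p.2 ≠ q.1) →
    (∀ p ∈ l, ∃ a ∈ ξ.eval.verts, ξ.eval.lab a = p.1) →
    (addRelabels l ξ).WF ∧ (addRelabels l ξ).Reduced ∧
    (addRelabels l ξ).eval.verts = ξ.eval.verts ∧
    (addRelabels l ξ).eval.edges = ξ.eval.edges ∧
    (∀ a, (addRelabels l ξ).eval.lab a = rl l (ξ.eval.lab a)) := by
  intro l
  induction l with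
  | nil => intro ξ hw hr _ _ _ _; exact ⟨hw, hr, rfl, rfl, fun a => rfl⟩
  | cons p l ih =>
      intro ξ hw hr hne hnd hts hsrc
      obtain ⟨w1, r1, v1, e1, lb1⟩ := ih ξ hw hr
        (fun q hq => hne q (List.mem_cons_of_mem _ hq))
        (List.nodup_cons.mp hnd).2
        (fun q hq q' hq' => hts q (List.mem_cons_of_mem _ hq) q' (List.mem_cons_of_mem _ hq'))
        (fun q hq => hsrc q (List.mem_cons_of_mem _ hq))
      have hfix : rl l p.1 = p.1 := by
        refine rl_fix l p.1 (fun q hq => ⟨?_, ?_⟩)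
        · intro hq1
          exact (List.nodup_cons.mp hnd).1 (hq1 ▸ List.mem_map_of_mem (f := Prod.fst) hq)
        · exact hts q (List.mem_cons_of_mem _ hq) p (List.mem_cons_self)
      obtain ⟨a0, ha0v, ha0l⟩ := hsrc p (List.mem_cons_self)
      refine ⟨⟨hne p (List.mem_cons_self), w1⟩, ⟨r1, ?_⟩, v1, e1, ?_⟩
      · refine ⟨a0, v1 ▸ ha0v, ?_⟩
        rw [lb1 a0, ha0l, hfix]
      · intro a
        show (if (addRelabels l ξ).eval.lab a = p.1 then p.2 else (addRelabels l ξ).eval.lab a)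
          = rl (p :: l) (ξ.eval.lab a)
        rw [lb1 a]
        rfl


theorem mem_join_edges (x y : Fin k) (ζ : GlueExpr k) (e : Sym2 ℕ) :
    e ∈ (GlueExpr.join x y ζ).eval.edges ↔ e ∈ ζ.eval.edges ∨
      ∃ a b, a ∈ ζ.eval.verts ∧ b ∈ ζ.eval.verts ∧ a ≠ b ∧
        ζ.eval.lab a = x ∧ ζ.eval.lab b = y ∧ e = s(a, b) := by
  show e ∈ ζ.eval.edges ∪ _ ↔ _
  rw [Finset.mem_union, Finset.mem_image]
  apply or_congr Iff.rfl
  constructor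
  · rintro ⟨p, hp, rfl⟩
    rw [Finset.mem_filter, Finset.mem_product] at hp
    exact ⟨p.1, p.2, hp.1.1, hp.1.2, hp.2.1, hp.2.2.1, hp.2.2.2, rfl⟩
  · rintro ⟨a, b, h1, h2, h3, h4, h5, rfl⟩
    refine ⟨(a, b), ?_, rfl⟩
    rw [Finset.mem_filter, Finset.mem_product]
    exact ⟨⟨h1, h2⟩, h3, h4, h5⟩

/-- The main construction lemma. -/
theorem main : ∀ (ψ : FuseExpr k), ψ.WF → ∀ (t : ψ.eval.V → ℕ) (Ext : ℕ → Prop)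
    (Fut : Set (Sym2 ℕ)),
    (∀ v w : ψ.eval.V, ((∃ w', w' ≠ v ∧ t w' = t v) ∨ Ext (t v)) →
      ψ.eval.lab w = ψ.eval.lab v → t w = t v) →
    (∀ u v u' v' : ψ.eval.V, ψ.eval.lab u' = ψ.eval.lab u → ψ.eval.lab v' = ψ.eval.lab v →
      s(t u, t v) ∈ Fut → t u' ≠ t v' → s(t u', t v') ∈ Fut) →
    ∃ o : Option (GlueExpr k), Res ψ.eval t Fut o := by
  intro ψ
  induction ψ with
  | intro i =>
      intro _ t Ext Fut hB hA
      refine ⟨none, fun e he => ?_⟩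
      obtain ⟨-, u, v, hadj, -, -⟩ := he
      exact hadj
  | relabel i j ψ ih =>
      intro hwf t Ext Fut hB hA
      have hB' : ∀ v w : ψ.eval.V, ((∃ w', w' ≠ v ∧ t w' = t v) ∨ Ext (t v)) →
          ψ.eval.lab w = ψ.eval.lab v → t w = t v := by
        intro v w hp hl
        refine hB v w hp ?_
        show (if ψ.eval.lab w = i then j else ψ.eval.lab w)
          = (if ψ.eval.lab v = i then j else ψ.eval.lab v)
        rw [hl]
      have hA' : ∀ u v u' v' : ψ.eval.V, ψ.eval.lab u' = ψ.eval.lab u →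
          ψ.eval.lab v' = ψ.eval.lab v → s(t u, t v) ∈ Fut → t u' ≠ t v' →
          s(t u', t v') ∈ Fut := by
        intro u v u' v' h1 h2 hf hne
        refine hA u v u' v' ?_ ?_ hf hne
        · show (if ψ.eval.lab u' = i then j else ψ.eval.lab u')
            = (if ψ.eval.lab u = i then j else ψ.eval.lab u)
          rw [h1]
        · show (if ψ.eval.lab v' = i then j else ψ.eval.lab v')
            = (if ψ.eval.lab v = i then j else ψ.eval.lab v)
          rw [h2]
      obtain ⟨o, ho⟩ := ih hwf.2 t Ext Fut hB' hA'
      match o, ho with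
      | none, ho => exact ⟨none, ho⟩
      | some ξ, ⟨hw, hr, hs⟩ =>
        by_cases hcl : ∃ a ∈ ξ.eval.verts, ξ.eval.lab a = i
        · refine ⟨some (.relabel i j ξ), ⟨hwf.1, hw⟩, ⟨hr, hcl⟩, ?_, ?_, ?_⟩
          · exact hs.edges
          · exact hs.verts
          · intro a ha
            obtain ⟨u, htu, hlu⟩ := hs.labs a ha
            refine ⟨u, htu, ?_⟩
            show (if ψ.eval.lab u = i then j else ψ.eval.lab u)
              = (if ξ.eval.lab a = i then j else ξ.eval.lab a)
            rw [hlu]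
        · refine ⟨some ξ, hw, hr, hs.edges, hs.verts, ?_⟩
          intro a ha
          obtain ⟨u, htu, hlu⟩ := hs.labs a ha
          refine ⟨u, htu, ?_⟩
          have : ξ.eval.lab a ≠ i := fun h => hcl ⟨a, ha, h⟩
          show (if ψ.eval.lab u = i then j else ψ.eval.lab u) = ξ.eval.lab a
          rw [hlu, if_neg this]
  | fuse i ψ ih =>
      intro hwf t Ext Fut hB hA
      let pr : ψ.eval.V → (FuseExpr.fuse i ψ).eval.V :=
        fun v => if h : ψ.eval.lab v = i then none else some ⟨v, h⟩
      have prsome : ∀ (v) (h : ψ.eval.lab v ≠ i), pr v = some ⟨v, h⟩ :=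
        fun v h => dif_neg h
      have prnone : ∀ (v), ψ.eval.lab v = i → pr v = none := fun v h => dif_pos h
      have labpr : ∀ v, (FuseExpr.fuse i ψ).eval.lab (pr v) = ψ.eval.lab v := by
        intro v
        by_cases h : ψ.eval.lab v = i
        · rw [prnone v h]; exact h.symm
        · rw [prsome v h]; rfl
      let t' : ψ.eval.V → ℕ := fun v => t (pr v)
      have ht' : ∀ v, t' v = t (pr v) := fun v => rfl
      have hB' : ∀ v w : ψ.eval.V, ((∃ w', w' ≠ v ∧ t' w' = t' v) ∨ Ext (t' v)) →
          ψ.eval.lab w = ψ.eval.lab v → t' w = t' v := by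
        intro v w hp hl
        by_cases hv : ψ.eval.lab v = i
        · show t (pr w) = t (pr v)
          rw [prnone v hv, prnone w (hl.trans hv)]
        · show t (pr w) = t (pr v)
          refine hB (pr v) (pr w) ?_ (by rw [labpr, labpr, hl])
          rcases hp with ⟨w', hne, heq⟩ | he
          · refine Or.inl ⟨pr w', fun hc => hne ?_, heq⟩
            rw [prsome v hv] at hc
            by_cases hw' : ψ.eval.lab w' = i
            · rw [prnone w' hw'] at hc; exact absurd hc (by simp)
            · rw [prsome w' hw'] at hc
              exact congrArg Subtype.val (Option.some_injective _ hc)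
          · exact Or.inr he
      have hA' : ∀ u v u' v' : ψ.eval.V, ψ.eval.lab u' = ψ.eval.lab u →
          ψ.eval.lab v' = ψ.eval.lab v → s(t' u, t' v) ∈ Fut → t' u' ≠ t' v' →
          s(t' u', t' v') ∈ Fut := by
        intro u v u' v' h1 h2 hf hne
        exact hA (pr u) (pr v) (pr u') (pr v')
          (by rw [labpr, labpr, h1]) (by rw [labpr, labpr, h2]) hf hne
      have adj1 : ∀ u v : ψ.eval.V, ψ.eval.G.Adj u v → t' u ≠ t' v →
          (FuseExpr.fuse i ψ).eval.G.Adj (pr u) (pr v) := by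
        intro u v hadj hne
        by_cases hu : ψ.eval.lab u = i <;> by_cases hv : ψ.eval.lab v = i
        · exact absurd (show t (pr u) = t (pr v) by rw [prnone u hu, prnone v hv]) hne
        · rw [prnone u hu, prsome v hv]
          exact ⟨u, hu, hadj⟩
        · rw [prsome u hu, prnone v hv]
          exact ⟨v, hv, hadj⟩
        · rw [prsome u hu, prsome v hv]
          exact hadj
      have SurvEq : ∀ e, Surv ψ.eval t' Fut e ↔ Surv (FuseExpr.fuse i ψ).eval t Fut e := by
        intro e
        constructor
        · rintro ⟨hef, u, v, hadj, hne, rfl⟩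
          exact ⟨hef, pr u, pr v, adj1 u v hadj hne, hne, rfl⟩
        · rintro ⟨hef, a, b, hadj, hne, rfl⟩
          refine ⟨hef, ?_⟩
          match a, b, hadj with
          | some u, some v, hadj =>
            refine ⟨u.1, v.1, hadj, ?_, ?_⟩
            · show t (pr u.1) ≠ t (pr v.1)
              rw [prsome u.1 u.2, prsome v.1 v.2]
              exact hne
            · show s(t (some u), t (some v)) = s(t (pr u.1), t (pr v.1))
              rw [prsome u.1 u.2, prsome v.1 v.2]
          | some u, none, hadj =>
            obtain ⟨w, hw, hadjw⟩ := hadj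
            refine ⟨u.1, w, hadjw, ?_, ?_⟩
            · show t (pr u.1) ≠ t (pr w)
              rw [prsome u.1 u.2, prnone w hw]
              exact hne
            · show s(t (some u), t none) = s(t (pr u.1), t (pr w))
              rw [prsome u.1 u.2, prnone w hw]
          | none, some v, hadj =>
            obtain ⟨w, hw, hadjw⟩ := hadj
            refine ⟨w, v.1, hadjw, ?_, ?_⟩
            · show t (pr w) ≠ t (pr v.1)
              rw [prsome v.1 v.2, prnone w hw]
              exact hne
            · show s(t none, t (some v)) = s(t (pr w), t (pr v.1))
              rw [prsome v.1 v.2, prnone w hw]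
      obtain ⟨o, ho⟩ := ih hwf.1 t' Ext Fut hB' hA'
      match o, ho with
      | none, ho =>
        exact ⟨none, fun e he => ho e ((SurvEq e).mpr he)⟩
      | some ξ, ⟨hw, hr, hs⟩ =>
        refine ⟨some ξ, hw, hr, fun e => (hs.edges e).trans (SurvEq e), hs.verts, ?_⟩
        intro a ha
        obtain ⟨u, htu, hlu⟩ := hs.labs a ha
        exact ⟨pr u, htu, by rw [labpr]; exact hlu⟩
  | union ψ1 ψ2 ih1 ih2 =>
      intro hwf t Ext Fut hB hA
      obtain ⟨hwf1, hwf2⟩ := hwf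
      set t1 : ψ1.eval.V → ℕ := fun v => t (Sum.inl v) with ht1def
      set t2 : ψ2.eval.V → ℕ := fun v => t (Sum.inr v) with ht2def
      set pE2 : Set (Sym2 ℕ) :=
        {e | ∃ u v : ψ2.eval.V, ψ2.eval.G.Adj u v ∧ t2 u ≠ t2 v ∧ e = s(t2 u, t2 v)} with hpE2def
      -- transported hypotheses for the left branch
      have hB1 : ∀ v w : ψ1.eval.V,
          ((∃ w', w' ≠ v ∧ t1 w' = t1 v) ∨ (Ext (t1 v) ∨ ∃ v2 : ψ2.eval.V, t2 v2 = t1 v)) →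
          ψ1.eval.lab w = ψ1.eval.lab v → t1 w = t1 v := by
        intro v w hp hl
        refine hB (Sum.inl v) (Sum.inl w) ?_ hl
        rcases hp with ⟨w', hne, heq⟩ | he | ⟨v2, heq⟩
        · exact Or.inl ⟨Sum.inl w', fun hc => hne (Sum.inl_injective hc), heq⟩
        · exact Or.inr he
        · exact Or.inl ⟨Sum.inr v2, Sum.inr_ne_inl, heq⟩
      have hB2 : ∀ v w : ψ2.eval.V,
          ((∃ w', w' ≠ v ∧ t2 w' = t2 v) ∨ (Ext (t2 v) ∨ ∃ v1 : ψ1.eval.V, t1 v1 = t2 v)) →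
          ψ2.eval.lab w = ψ2.eval.lab v → t2 w = t2 v := by
        intro v w hp hl
        refine hB (Sum.inr v) (Sum.inr w) ?_ hl
        rcases hp with ⟨w', hne, heq⟩ | he | ⟨v1, heq⟩
        · exact Or.inl ⟨Sum.inr w', fun hc => hne (Sum.inr_injective hc), heq⟩
        · exact Or.inr he
        · exact Or.inl ⟨Sum.inl v1, Sum.inl_ne_inr, heq⟩
      have hA2 : ∀ u v u' v' : ψ2.eval.V, ψ2.eval.lab u' = ψ2.eval.lab u →
          ψ2.eval.lab v' = ψ2.eval.lab v → s(t2 u, t2 v) ∈ Fut → t2 u' ≠ t2 v' →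
          s(t2 u', t2 v') ∈ Fut := by
        intro u v u' v' h1 h2 hf hne
        exact hA (Sum.inr u) (Sum.inr v) (Sum.inr u') (Sum.inr v') h1 h2 hf hne
      have hA1 : ∀ u v u' v' : ψ1.eval.V, ψ1.eval.lab u' = ψ1.eval.lab u →
          ψ1.eval.lab v' = ψ1.eval.lab v → s(t1 u, t1 v) ∈ Fut ∪ pE2 → t1 u' ≠ t1 v' →
          s(t1 u', t1 v') ∈ Fut ∪ pE2 := by
        intro u v u' v' h1 h2 hf hne
        rcases hf with hf | hf
        · exact Or.inl (hA (Sum.inl u) (Sum.inl v) (Sum.inl u') (Sum.inl v') h1 h2 hf hne)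
        · obtain ⟨p, q, hadj, hpq, heq⟩ := hf
          have hu' : t1 u' = t1 u := by
            rcases Sym2.eq_iff.mp heq with ⟨hh1, -⟩ | ⟨hh1, -⟩
            · exact hB (Sum.inl u) (Sum.inl u')
                (Or.inl ⟨Sum.inr p, Sum.inr_ne_inl, hh1.symm⟩) h1
            · exact hB (Sum.inl u) (Sum.inl u')
                (Or.inl ⟨Sum.inr q, Sum.inr_ne_inl, hh1.symm⟩) h1
          have hv' : t1 v' = t1 v := by
            rcases Sym2.eq_iff.mp heq with ⟨-, hh2⟩ | ⟨-, hh2⟩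
            · exact hB (Sum.inl v) (Sum.inl v')
                (Or.inl ⟨Sum.inr q, Sum.inr_ne_inl, hh2.symm⟩) h2
            · exact hB (Sum.inl v) (Sum.inl v')
                (Or.inl ⟨Sum.inr p, Sum.inr_ne_inl, hh2.symm⟩) h2
          rw [hu', hv', heq]
          exact Or.inr ⟨p, q, hadj, hpq, rfl⟩
      obtain ⟨o1, ho1⟩ := ih1 hwf1 t1 (fun a => Ext a ∨ ∃ v2 : ψ2.eval.V, t2 v2 = a)
        (Fut ∪ pE2) hB1 hA1
      obtain ⟨o2, ho2⟩ := ih2 hwf2 t2 (fun a => Ext a ∨ ∃ v1 : ψ1.eval.V, t1 v1 = a)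
        Fut hB2 hA2
      have adj11 : ∀ u v : ψ1.eval.V, (FuseExpr.union ψ1 ψ2).eval.G.Adj (Sum.inl u) (Sum.inl v)
          ↔ ψ1.eval.G.Adj u v := fun u v => Iff.rfl
      have adj22 : ∀ u v : ψ2.eval.V, (FuseExpr.union ψ1 ψ2).eval.G.Adj (Sum.inr u) (Sum.inr v)
          ↔ ψ2.eval.G.Adj u v := fun u v => Iff.rfl
      have SurvSplit : ∀ e, Surv (FuseExpr.union ψ1 ψ2).eval t Fut e ↔
          Surv ψ1.eval t1 (Fut ∪ pE2) e ∨ Surv ψ2.eval t2 Fut e := by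
        intro e
        constructor
        · rintro ⟨hef, a, b, hadj, hne, heq⟩
          match a, b, hadj with
          | Sum.inl u, Sum.inl v, hadj =>
            by_cases hp : e ∈ pE2
            · obtain ⟨p, q, hadj2, hpq, heq2⟩ := hp
              exact Or.inr ⟨hef, p, q, hadj2, hpq, heq2⟩
            · refine Or.inl ⟨?_, u, v, hadj, hne, heq⟩
              rintro (h | h)
              · exact hef h
              · exact hp h
          | Sum.inr u, Sum.inr v, hadj =>
            exact Or.inr ⟨hef, u, v, hadj, hne, heq⟩
        · rintro (⟨hef, u, v, hadj, hne, heq⟩ | ⟨hef, u, v, hadj, hne, heq⟩)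
          · exact ⟨fun h => hef (Or.inl h), Sum.inl u, Sum.inl v, hadj, hne, heq⟩
          · exact ⟨hef, Sum.inr u, Sum.inr v, hadj, hne, heq⟩
      match o1, ho1, o2, ho2 with
      | none, ho1, none, ho2 =>
        refine ⟨none, fun e he => ?_⟩
        rcases (SurvSplit e).mp he with h | h
        · exact ho1 e h
        · exact ho2 e h
      | none, ho1, some ξ2, ⟨hw2, hr2, hs2⟩ =>
        refine ⟨some ξ2, hw2, hr2, ?_, hs2.verts, ?_⟩
        · intro e
          rw [hs2.edges e]
          constructor
          · intro h
            exact (SurvSplit e).mpr (Or.inr h)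
          · intro h
            rcases (SurvSplit e).mp h with h | h
            · exact absurd h (ho1 e)
            · exact h
        · intro a ha
          obtain ⟨u, htu, hlu⟩ := hs2.labs a ha
          exact ⟨Sum.inr u, htu, hlu⟩
      | some ξ1, ⟨hw1, hr1, hs1⟩, none, ho2 =>
        refine ⟨some ξ1, hw1, hr1, ?_, hs1.verts, ?_⟩
        · intro e
          rw [hs1.edges e]
          constructor
          · intro h
            exact (SurvSplit e).mpr (Or.inl h)
          · intro h
            rcases (SurvSplit e).mp h with h | h
            · exact h
            · exact absurd h (ho2 e)
        · intro a ha
          obtain ⟨u, htu, hlu⟩ := hs1.labs a ha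
          exact ⟨Sum.inl u, htu, hlu⟩
      | some ξ1, ⟨hw1, hr1, hs1⟩, some ξ2, ⟨hw2, hr2, hs2⟩ =>
        set T1 := ξ1.eval with hT1def
        set T2 := ξ2.eval with hT2def
        -- the key uniqueness property for shared titles
        have hCross : ∀ a, a ∈ T1.verts → a ∈ T2.verts → ∀ (c : Fin k),
            ((∃ u1 : ψ1.eval.V, t1 u1 = a ∧ ψ1.eval.lab u1 = c) ∨
              (∃ u2 : ψ2.eval.V, t2 u2 = a ∧ ψ2.eval.lab u2 = c)) →
            (∀ w ∈ T1.verts, T1.lab w = c → w = a) ∧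
            (∀ w ∈ T2.verts, T2.lab w = c → w = a) := by
          intro a ha1 ha2 c hc
          obtain ⟨u1, htu1, -⟩ := hs1.labs a ha1
          obtain ⟨u2, htu2, -⟩ := hs2.labs a ha2
          have hall : ∀ w' : (FuseExpr.union ψ1 ψ2).eval.V,
              (FuseExpr.union ψ1 ψ2).eval.lab w' = c → t w' = a := by
            have hz : ∃ z : (FuseExpr.union ψ1 ψ2).eval.V,
                t z = a ∧ (FuseExpr.union ψ1 ψ2).eval.lab z = c := by
              rcases hc with ⟨u, hh1, hh2⟩ | ⟨u, hh1, hh2⟩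
              · exact ⟨Sum.inl u, hh1, hh2⟩
              · exact ⟨Sum.inr u, hh1, hh2⟩
            obtain ⟨z, htz, hlz⟩ := hz
            intro w' hlw'
            by_cases hzc : z = Sum.inl u1
            · refine (hB z w' (Or.inl ⟨Sum.inr u2, ?_, ?_⟩) (by rw [hlw', hlz])).trans htz
              · rw [hzc]; exact Sum.inr_ne_inl
              · rw [hzc]; exact htu2.trans htu1.symm
            · refine (hB z w' (Or.inl ⟨Sum.inl u1, fun hcon => hzc hcon.symm, ?_⟩)
                (by rw [hlw', hlz])).trans htz
              exact htu1.trans htz.symm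
          constructor
          · intro w hw hlw
            obtain ⟨uw, htuw, hluw⟩ := hs1.labs w hw
            have hth := hall (Sum.inl uw) (by show ψ1.eval.lab uw = c; rw [hluw, hlw])
            rw [← htuw]
            exact hth
          · intro w hw hlw
            obtain ⟨uw, htuw, hluw⟩ := hs2.labs w hw
            have hth := hall (Sum.inr uw) (by show ψ2.eval.lab uw = c; rw [hluw, hlw])
            rw [← htuw]
            exact hth
        have hCross1 : ∀ a, a ∈ T1.verts → a ∈ T2.verts →
            (∀ w ∈ T1.verts, T1.lab w = T1.lab a → w = a) ∧
            (∀ w ∈ T2.verts, T2.lab w = T1.lab a → w = a) := by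
          intro a ha1 ha2
          obtain ⟨u1, htu1, hlu1⟩ := hs1.labs a ha1
          exact hCross a ha1 ha2 (T1.lab a) (Or.inl ⟨u1, htu1, hlu1⟩)
        have hCross2 : ∀ a, a ∈ T1.verts → a ∈ T2.verts →
            (∀ w ∈ T1.verts, T1.lab w = T2.lab a → w = a) ∧
            (∀ w ∈ T2.verts, T2.lab w = T2.lab a → w = a) := by
          intro a ha1 ha2
          obtain ⟨u2, htu2, hlu2⟩ := hs2.labs a ha2
          exact hCross a ha1 ha2 (T2.lab a) (Or.inr ⟨u2, htu2, hlu2⟩)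
        -- list of alignment relabels
        set S : Finset ℕ := (T1.verts ∩ T2.verts).filter (fun a => T1.lab a ≠ T2.lab a)
          with hSdef
        have hSmem : ∀ a, a ∈ S ↔ (a ∈ T1.verts ∧ a ∈ T2.verts ∧ T1.lab a ≠ T2.lab a) := by
          intro a
          rw [hSdef, Finset.mem_filter, Finset.mem_inter]
          exact ⟨fun ⟨⟨h1, h2⟩, h3⟩ => ⟨h1, h2, h3⟩, fun ⟨h1, h2, h3⟩ => ⟨⟨h1, h2⟩, h3⟩⟩
        set l : List (Fin k × Fin k) := S.toList.map (fun a => (T1.lab a, T2.lab a)) with hldef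
        have hmeml : ∀ p, p ∈ l ↔ ∃ a ∈ S, p = (T1.lab a, T2.lab a) := by
          intro p
          rw [hldef, List.mem_map]
          constructor
          · rintro ⟨a, ha, rfl⟩
            exact ⟨a, Finset.mem_toList.mp ha, rfl⟩
          · rintro ⟨a, ha, rfl⟩
            exact ⟨a, Finset.mem_toList.mpr ha, rfl⟩
        have hlne : ∀ p ∈ l, p.1 ≠ p.2 := by
          intro p hp
          obtain ⟨a, ha, rfl⟩ := (hmeml p).mp hp
          exact ((hSmem a).mp ha).2.2
        have hlnd : (l.map Prod.fst).Nodup := by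
          have heq : l.map Prod.fst = S.toList.map (fun a => T1.lab a) := by
            rw [hldef, List.map_map]
            rfl
          rw [heq]
          refine List.Nodup.map_on ?_ (Finset.nodup_toList _)
          intro a ha a' ha' hEq
          rw [Finset.mem_toList] at ha ha'
          obtain ⟨h1', h2', h3'⟩ := (hSmem a').mp ha'
          obtain ⟨h1, h2, h3⟩ := (hSmem a).mp ha
          exact (hCross1 a' h1' h2').1 a h1 hEq
        have hlts : ∀ p ∈ l, ∀ q ∈ l, p.2 ≠ q.1 := by
          intro p hp q hq
          obtain ⟨a, ha, rfl⟩ := (hmeml p).mp hp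
          obtain ⟨a', ha', rfl⟩ := (hmeml q).mp hq
          obtain ⟨h1, h2, h3⟩ := (hSmem a).mp ha
          obtain ⟨h1', h2', h3'⟩ := (hSmem a').mp ha'
          intro hEq
          have hEq' : T2.lab a = T1.lab a' := hEq
          have hth : a' = a := (hCross2 a h1 h2).1 a' h1' hEq'.symm
          exact h3 (by rw [hEq', hth])
        have hlsrc : ∀ p ∈ l, ∃ b ∈ T1.verts, T1.lab b = p.1 := by
          intro p hp
          obtain ⟨a, ha, rfl⟩ := (hmeml p).mp hp
          exact ⟨a, ((hSmem a).mp ha).1, rfl⟩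
        obtain ⟨w1', r1', v1', e1', lb1'⟩ := addRelabels_spec l ξ1 hw1 hr1 hlne hlnd hlts hlsrc
        set A := addRelabels l ξ1 with hAdef
        -- labels after realignment
        have hrlmem : ∀ a ∈ S, rl l (T1.lab a) = T2.lab a := by
          intro a ha
          exact rl_mem l (T1.lab a) (T2.lab a) ((hmeml _).mpr ⟨a, ha, rfl⟩) hlnd hlts
        have hrlfix : ∀ b ∈ T1.verts, b ∉ S → rl l (T1.lab b) = T1.lab b := by
          intro b hb hbS
          refine rl_fix l (T1.lab b) ?_
          intro q hq
          obtain ⟨a, ha, rfl⟩ := (hmeml q).mp hq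
          obtain ⟨h1, h2, h3⟩ := (hSmem a).mp ha
          constructor
          · intro hEq
            have : b = a := (hCross1 a h1 h2).1 b hb hEq.symm
            exact hbS (this ▸ ha)
          · intro hEq
            have : b = a := (hCross2 a h1 h2).1 b hb hEq.symm
            subst this
            exact h3 hEq.symm
        have hAlab : ∀ b, A.eval.lab b = rl l (T1.lab b) := lb1'
        -- label of aligned shared vertices
        have hlabS : ∀ a ∈ S, A.eval.lab a = T2.lab a := by
          intro a ha
          rw [hAlab, hrlmem a ha]
        have hlabNS : ∀ b ∈ T1.verts, b ∉ S → A.eval.lab b = T1.lab b := by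
          intro b hb hbS
          rw [hAlab, hrlfix b hb hbS]
        -- glueability
        have hglue : Glueable A.eval T2 := by
          intro v hv
          rw [Finset.mem_inter, v1'] at hv
          obtain ⟨hv1, hv2⟩ := hv
          have hlabv : A.eval.lab v = T2.lab v := by
            by_cases hvS : v ∈ S
            · exact hlabS v hvS
            · have : T1.lab v = T2.lab v := by
                by_contra hc
                exact hvS ((hSmem v).mpr ⟨hv1, hv2, hc⟩)
              rw [hlabNS v hv1 hvS, this]
          refine ⟨hlabv, ?_, ?_⟩
          · intro w hw
            rw [v1'] at hw
            intro hlw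
            rw [hlabv] at hlw
            by_cases hwS : w ∈ S
            · have := hlabS w hwS
              rw [this] at hlw
              exact (hCross2 v hv1 hv2).2 w ((hSmem w).mp hwS).2.1 hlw
            · have := hlabNS w hw hwS
              rw [this] at hlw
              exact (hCross2 v hv1 hv2).1 w hw hlw
          · intro w hw hlw
            exact (hCross2 v hv1 hv2).2 w hw hlw
        -- edge disjointness
        have hdisj : T1.edges ∩ T2.edges = ∅ := by
          rw [Finset.eq_empty_iff_forall_notMem]
          intro e he
          rw [Finset.mem_inter] at he
          obtain ⟨he1, he2⟩ := he
          obtain ⟨hef1, -⟩ := (hs1.edges e).mp he1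
          obtain ⟨-, p, q, hadj2, hpq, heq2⟩ := (hs2.edges e).mp he2
          exact hef1 (Or.inr ⟨p, q, hadj2, hpq, heq2⟩)
        refine ⟨some (GlueExpr.glue A ξ2), ⟨w1', hw2, hglue⟩, ⟨r1', hr2, ?_, ?_⟩, ?_, ?_, ?_⟩
        · rw [e1']
          exact hdisj
        · intro v hv
          rw [Finset.mem_inter, v1'] at hv
          obtain ⟨hv1, hv2⟩ := hv
          obtain ⟨ee1, hee1, hvee1⟩ := (hs1.verts v).mp hv1
          obtain ⟨ee2, hee2, hvee2⟩ := (hs2.verts v).mp hv2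
          exact ⟨⟨ee1, by rw [e1']; exact hee1, hvee1⟩, ⟨ee2, hee2, hvee2⟩⟩
        · intro e
          show e ∈ A.eval.edges ∪ T2.edges ↔ _
          rw [e1', Finset.mem_union, SurvSplit e, hs1.edges e, hs2.edges e]
        · intro a
          show a ∈ A.eval.verts ∪ T2.verts ↔ _
          rw [v1', Finset.mem_union]
          constructor
          · intro h
            rcases h with h | h
            · obtain ⟨e, he, hae⟩ := (hs1.verts a).mp h
              refine ⟨e, ?_, hae⟩
              show e ∈ A.eval.edges ∪ T2.edges
              rw [e1', Finset.mem_union]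
              exact Or.inl he
            · obtain ⟨e, he, hae⟩ := (hs2.verts a).mp h
              refine ⟨e, ?_, hae⟩
              show e ∈ A.eval.edges ∪ T2.edges
              rw [e1', Finset.mem_union]
              exact Or.inr he
          · rintro ⟨e, he, hae⟩
            rw [show (GlueExpr.glue A ξ2).eval.edges = A.eval.edges ∪ T2.edges from rfl,
              e1', Finset.mem_union] at he
            rcases he with he | he
            · exact Or.inl ((hs1.verts a).mpr ⟨e, he, hae⟩)
            · exact Or.inr ((hs2.verts a).mpr ⟨e, he, hae⟩)
        · intro a ha
          have hglab : (GlueExpr.glue A ξ2).eval.lab a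
              = if a ∈ A.eval.verts then A.eval.lab a else T2.lab a := rfl
          by_cases h1 : a ∈ T1.verts
          · have hmem : a ∈ A.eval.verts := by rw [v1']; exact h1
            rw [hglab, if_pos hmem]
            by_cases hS : a ∈ S
            · obtain ⟨u2, htu2, hlu2⟩ := hs2.labs a ((hSmem a).mp hS).2.1
              refine ⟨Sum.inr u2, htu2, ?_⟩
              show ψ2.eval.lab u2 = A.eval.lab a
              rw [hlabS a hS, hlu2]
            · obtain ⟨u1, htu1, hlu1⟩ := hs1.labs a h1
              refine ⟨Sum.inl u1, htu1, ?_⟩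
              show ψ1.eval.lab u1 = A.eval.lab a
              rw [hlabNS a h1 hS, hlu1]
          · have hmem : a ∉ A.eval.verts := by rw [v1']; exact h1
            have h2 : a ∈ T2.verts := by
              have ha' : a ∈ A.eval.verts ∪ T2.verts := ha
              rcases Finset.mem_union.mp ha' with h | h
              · exact absurd h hmem
              · exact h
            rw [hglab, if_neg hmem]
            obtain ⟨u2, htu2, hlu2⟩ := hs2.labs a h2
            exact ⟨Sum.inr u2, htu2, hlu2⟩
  | join i j ψ ih =>
      intro hwf t Ext Fut hB hA
      obtain ⟨hij, hwfpsi⟩ := hwf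
      set EdS : Set (Sym2 ℕ) :=
        {e | ∃ u v : ψ.eval.V, ψ.eval.lab u = i ∧ ψ.eval.lab v = j ∧ t u ≠ t v ∧ e = s(t u, t v)}
        with hEdSdef
      have key : ∀ (c : Fin k) (p u u' : ψ.eval.V), ψ.eval.lab p = c → t u = t p →
          ψ.eval.lab u' = ψ.eval.lab u → ∃ p', ψ.eval.lab p' = c ∧ t p' = t u' := by
        intro c p u u' hpc htu hl
        by_cases hlu : ψ.eval.lab u = c
        · exact ⟨u', hl.trans hlu, rfl⟩
        · have hne : p ≠ u := fun h => hlu (h ▸ hpc)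
          have hth := hB u u' (Or.inl ⟨p, hne, htu.symm⟩) hl
          exact ⟨p, hpc, by rw [hth, htu]⟩
      have hA' : ∀ u v u' v' : ψ.eval.V, ψ.eval.lab u' = ψ.eval.lab u →
          ψ.eval.lab v' = ψ.eval.lab v → s(t u, t v) ∈ Fut ∪ EdS → t u' ≠ t v' →
          s(t u', t v') ∈ Fut ∪ EdS := by
        intro u v u' v' h1 h2 hf hne
        rcases hf with hf | hf
        · exact Or.inl (hA u v u' v' h1 h2 hf hne)
        · obtain ⟨p, q, hpi, hqj, hpq, hepq⟩ := hf
          rcases Sym2.eq_iff.mp hepq with ⟨ee1, ee2⟩ | ⟨ee1, ee2⟩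
          · obtain ⟨p', hp', htp'⟩ := key i p u u' hpi ee1 h1
            obtain ⟨q', hq', htq'⟩ := key j q v v' hqj ee2 h2
            refine Or.inr ⟨p', q', hp', hq', ?_, ?_⟩
            · rw [htp', htq']; exact hne
            · rw [htp', htq']
          · obtain ⟨q', hq', htq'⟩ := key j q u u' hqj ee1 h1
            obtain ⟨p', hp', htp'⟩ := key i p v v' hpi ee2 h2
            refine Or.inr ⟨p', q', hp', hq', ?_, ?_⟩
            · rw [htp', htq']; exact hne.symm
            · rw [htp', htq']
              exact Sym2.eq_swap
      obtain ⟨o, ho⟩ := ih hwfpsi t Ext (Fut ∪ EdS) hB hA'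
      by_cases hkeep : ∃ e ∈ EdS, e ∉ Fut
      · -- the join survives
        obtain ⟨e0, he0S, he0F⟩ := hkeep
        obtain ⟨p0, q0, hp0, hq0, hpq0, he0⟩ := he0S
        have hK1 : ∀ e ∈ EdS, e ∉ Fut := by
          intro e he hef
          obtain ⟨p, q, hpi, hqj, hpq, rfl⟩ := he
          apply he0F
          rw [he0]
          exact hA p q p0 q0 (by show ψ.eval.lab p0 = ψ.eval.lab p; rw [hp0, hpi])
            (by show ψ.eval.lab q0 = ψ.eval.lab q; rw [hq0, hqj]) hef hpq0
        have hdisj : ∀ u v : ψ.eval.V, ψ.eval.lab u = i → ψ.eval.lab v = j → t u ≠ t v := by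
          intro u v hu hv hc
          have huv : u ≠ v := fun h => hij (by rw [← hu, h, hv])
          have h1 := hB u p0 (Or.inl ⟨v, Ne.symm huv, hc.symm⟩)
            (by show ψ.eval.lab p0 = ψ.eval.lab u; rw [hp0, hu])
          have h2 := hB v q0 (Or.inl ⟨u, huv, hc⟩)
            (by show ψ.eval.lab q0 = ψ.eval.lab v; rw [hq0, hv])
          exact hpq0 (h1.trans (hc.trans h2.symm))
        have hfinV : (Set.univ : Set ψ.eval.V).Finite := @Set.finite_univ _ (evalFinite ψ)
        have hfinX : (t '' {v : ψ.eval.V | ψ.eval.lab v = i}).Finite :=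
          (hfinV.subset (Set.subset_univ _)).image t
        have hfinY : (t '' {v : ψ.eval.V | ψ.eval.lab v = j}).Finite :=
          (hfinV.subset (Set.subset_univ _)).image t
        set PX := hfinX.toFinset with hPXdef
        set PY := hfinY.toFinset with hPYdef
        have hPX : ∀ a, a ∈ PX ↔ ∃ v, ψ.eval.lab v = i ∧ t v = a := by
          intro a
          rw [hPXdef, Set.Finite.mem_toFinset]
          constructor
          · rintro ⟨v, hv, rfl⟩; exact ⟨v, hv, rfl⟩
          · rintro ⟨v, hv, rfl⟩; exact ⟨v, hv, rfl⟩
        have hPY : ∀ a, a ∈ PY ↔ ∃ v, ψ.eval.lab v = j ∧ t v = a := by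
          intro a
          rw [hPYdef, Set.Finite.mem_toFinset]
          constructor
          · rintro ⟨v, hv, rfl⟩; exact ⟨v, hv, rfl⟩
          · rintro ⟨v, hv, rfl⟩; exact ⟨v, hv, rfl⟩
        have hPXY : ∀ a, a ∈ PX → a ∈ PY → False := by
          intro a haX haY
          obtain ⟨u, hu, rfl⟩ := (hPX a).mp haX
          obtain ⟨v, hv, hveq⟩ := (hPY _).mp haY
          exact (hdisj u v hu hv) hveq.symm
        have hp0X : t p0 ∈ PX := (hPX _).mpr ⟨p0, hp0, rfl⟩
        have hq0Y : t q0 ∈ PY := (hPY _).mpr ⟨q0, hq0, rfl⟩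
        have hEdSc : ∀ e, e ∈ EdS ↔ ∃ a ∈ PX, ∃ b ∈ PY, e = s(a, b) := by
          intro e
          constructor
          · rintro ⟨u, v, hu, hv, hne, rfl⟩
            exact ⟨t u, (hPX _).mpr ⟨u, hu, rfl⟩, t v, (hPY _).mpr ⟨v, hv, rfl⟩, rfl⟩
          · rintro ⟨a, ha, b, hb, rfl⟩
            obtain ⟨u, hu, rfl⟩ := (hPX a).mp ha
            obtain ⟨v, hv, rfl⟩ := (hPY b).mp hb
            exact ⟨u, v, hu, hv, hdisj u v hu hv, rfl⟩
        match o, ho with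
        | some ξ, ⟨hw, hr, hs⟩ =>
          have mk : ∀ (c : Fin k) (PC : Finset ℕ),
              (∀ a, a ∈ PC ↔ ∃ v, ψ.eval.lab v = c ∧ t v = a) →
              ∃ x' : Fin k, (∀ b ∈ ξ.eval.verts, (ξ.eval.lab b = x' ↔ b ∈ PC)) ∧
                (x' = c ∨ ∀ a ∈ PC, a ∈ ξ.eval.verts) := by
            intro c PC hPC
            by_cases hmx : ∃ a, a ∈ PC ∧ a ∈ ξ.eval.verts ∧ ξ.eval.lab a ≠ c
            · obtain ⟨a1, haPC, haM, halab⟩ := hmx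
              obtain ⟨p1, hp1, htp1⟩ := (hPC a1).mp haPC
              obtain ⟨u1, htu1, hlu1⟩ := hs.labs a1 haM
              have hne1 : p1 ≠ u1 := by
                intro h
                exact halab (by rw [← hlu1, ← h, hp1])
              have hallc : ∀ w, ψ.eval.lab w = c → t w = a1 := fun w hwc =>
                (hB p1 w (Or.inl ⟨u1, Ne.symm hne1, htu1.trans htp1.symm⟩)
                  (by show ψ.eval.lab w = ψ.eval.lab p1; rw [hwc, hp1])).trans htp1
              have hPCsing : ∀ b ∈ PC, b = a1 := by
                intro b hb
                obtain ⟨v, hv, rfl⟩ := (hPC b).mp hb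
                exact hallc v hv
              have hMsing : ∀ b ∈ ξ.eval.verts, ξ.eval.lab b = ξ.eval.lab a1 → b = a1 := by
                intro b hbM hbl
                obtain ⟨ub, htub, hlub⟩ := hs.labs b hbM
                have hth := hB u1 ub (Or.inl ⟨p1, hne1, htp1.trans htu1.symm⟩)
                  (by show ψ.eval.lab ub = ψ.eval.lab u1; rw [hlub, hbl, ← hlu1])
                rw [← htub, hth, htu1]
              refine ⟨ξ.eval.lab a1, ?_, Or.inr ?_⟩
              · intro b hbM
                constructor
                · intro hbl
                  rw [hMsing b hbM hbl]
                  exact haPC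
                · intro hbPC
                  rw [hPCsing b hbPC]
              · intro b hb
                rw [hPCsing b hb]
                exact haM
            · push_neg at hmx
              refine ⟨c, ?_, Or.inl rfl⟩
              intro b hbM
              constructor
              · intro hbl
                obtain ⟨ub, htub, hlub⟩ := hs.labs b hbM
                exact (hPC b).mpr ⟨ub, by rw [hlub, hbl], htub⟩
              · intro hbPC
                exact hmx b hbPC hbM
          obtain ⟨x', hX1, hX2⟩ := mk i PX hPX
          obtain ⟨y', hY1, hY2⟩ := mk j PY hPY
          have hxy : x' ≠ y' := by
            intro hc
            rcases hX2 with hx | hx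
            · rcases hY2 with hy | hy
              · exact hij (by rw [← hx, ← hy, hc])
              · have h1 : ξ.eval.lab (t q0) = y' := (hY1 _ (hy _ hq0Y)).mpr hq0Y
                have h2 : t q0 ∈ PX := (hX1 _ (hy _ hq0Y)).mp (by rw [h1]; exact hc.symm)
                exact hPXY _ h2 hq0Y
            · have h1 : ξ.eval.lab (t p0) = x' := (hX1 _ (hx _ hp0X)).mpr hp0X
              have h2 : t p0 ∈ PY := (hY1 _ (hx _ hp0X)).mp (by rw [h1, hc])
              exact hPXY _ hp0X h2
          set lX : List (ℕ × Fin k) := (PX \ ξ.eval.verts).toList.map (fun a => (a, x'))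
            with hlXdef
          set lY : List (ℕ × Fin k) := (PY \ ξ.eval.verts).toList.map (fun a => (a, y'))
            with hlYdef
          have hfst : (lX ++ lY).map Prod.fst
              = (PX \ ξ.eval.verts).toList ++ (PY \ ξ.eval.verts).toList := by
            rw [List.map_append, hlXdef, hlYdef, List.map_map, List.map_map]
            rw [show (Prod.fst ∘ fun a : ℕ => (a, x')) = id from rfl,
              show (Prod.fst ∘ fun a : ℕ => (a, y')) = id from rfl, List.map_id, List.map_id]
          have hndXY : ((lX ++ lY).map Prod.fst).Nodup := by
            rw [hfst]
            refine List.Nodup.append (Finset.nodup_toList _) (Finset.nodup_toList _) ?_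
            intro a haX haY
            rw [Finset.mem_toList, Finset.mem_sdiff] at haX haY
            exact hPXY a haX.1 haY.1
          have hfresh : ∀ p ∈ lX ++ lY, p.1 ∉ ξ.eval.verts := by
            intro p hp
            rcases List.mem_append.mp hp with hp | hp
            · rw [hlXdef, List.mem_map] at hp
              obtain ⟨a, ha, rfl⟩ := hp
              rw [Finset.mem_toList, Finset.mem_sdiff] at ha
              exact ha.2
            · rw [hlYdef, List.mem_map] at hp
              obtain ⟨a, ha, rfl⟩ := hp
              rw [Finset.mem_toList, Finset.mem_sdiff] at ha
              exact ha.2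
          obtain ⟨w1, r1, v1, e1, lb1, lb2⟩ := addIntros_spec (lX ++ lY) ξ hw hr hfresh hndXY
          set ζ := addIntros (lX ++ lY) ξ with hζdef
          have hverts1 : ∀ a, a ∈ ζ.eval.verts ↔ a ∈ ξ.eval.verts ∨
              (a ∈ PX ∧ a ∉ ξ.eval.verts) ∨ (a ∈ PY ∧ a ∉ ξ.eval.verts) := by
            intro a
            rw [hζdef, v1, Finset.mem_union, hfst, List.toFinset_append, Finset.mem_union,
              Finset.toList_toFinset, Finset.toList_toFinset, Finset.mem_sdiff, Finset.mem_sdiff]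
          have hPXsub : ∀ a ∈ PX, a ∈ ζ.eval.verts := by
            intro a ha
            by_cases hm : a ∈ ξ.eval.verts
            · exact (hverts1 a).mpr (Or.inl hm)
            · exact (hverts1 a).mpr (Or.inr (Or.inl ⟨ha, hm⟩))
          have hPYsub : ∀ a ∈ PY, a ∈ ζ.eval.verts := by
            intro a ha
            by_cases hm : a ∈ ξ.eval.verts
            · exact (hverts1 a).mpr (Or.inl hm)
            · exact (hverts1 a).mpr (Or.inr (Or.inr ⟨ha, hm⟩))
          have hlabz : ∀ b ∈ ζ.eval.verts,
              (ζ.eval.lab b = x' ↔ b ∈ PX) ∧ (ζ.eval.lab b = y' ↔ b ∈ PY) := by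
            intro b hb
            rcases (hverts1 b).mp hb with hm | ⟨hPXb, hm⟩ | ⟨hPYb, hm⟩
            · rw [hζdef, lb1 b hm]
              exact ⟨hX1 b hm, hY1 b hm⟩
            · have hmem : (b, x') ∈ lX ++ lY := by
                refine List.mem_append.mpr (Or.inl ?_)
                rw [hlXdef, List.mem_map]
                exact ⟨b, by rw [Finset.mem_toList, Finset.mem_sdiff]; exact ⟨hPXb, hm⟩, rfl⟩
              have hlb := lb2 _ hmem
              exact ⟨⟨fun _ => hPXb, fun _ => hlb⟩,
                ⟨fun h => absurd (hlb.symm.trans h) hxy, fun h => absurd h (hPXY b hPXb)⟩⟩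
            · have hmem : (b, y') ∈ lX ++ lY := by
                refine List.mem_append.mpr (Or.inr ?_)
                rw [hlYdef, List.mem_map]
                exact ⟨b, by rw [Finset.mem_toList, Finset.mem_sdiff]; exact ⟨hPYb, hm⟩, rfl⟩
              have hlb := lb2 _ hmem
              refine ⟨⟨fun h => absurd ((hlb.symm.trans h).symm) hxy, fun h => (hPXY b h hPYb).elim⟩,
                ⟨fun _ => hPYb, fun _ => hlb⟩⟩
          have hcreated : ∀ e, (∃ a b, a ∈ ζ.eval.verts ∧ b ∈ ζ.eval.verts ∧ a ≠ b ∧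
              ζ.eval.lab a = x' ∧ ζ.eval.lab b = y' ∧ e = s(a, b)) ↔ e ∈ EdS := by
            intro e
            constructor
            · rintro ⟨a, b, haV, hbV, hab, hax, hby, rfl⟩
              exact (hEdSc _).mpr ⟨a, ((hlabz a haV).1).mp hax, b, ((hlabz b hbV).2).mp hby, rfl⟩
            · intro he
              obtain ⟨a, ha, b, hb, rfl⟩ := (hEdSc e).mp he
              have haV := hPXsub a ha
              have hbV := hPYsub b hb
              exact ⟨a, b, haV, hbV, fun h => hPXY a ha (h ▸ hb),
                ((hlabz a haV).1).mpr ha, ((hlabz b hbV).2).mpr hb, rfl⟩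
          have hEdSnotM : ∀ e ∈ EdS, e ∉ ξ.eval.edges := by
            intro e he hem
            exact ((hs.edges e).mp hem).1 (Or.inr he)
          have hp0z := hPXsub _ hp0X
          have hq0z := hPYsub _ hq0Y
          refine ⟨some (GlueExpr.join x' y' ζ), ⟨hxy, w1⟩, ⟨r1, ?_, ?_⟩, ?_, ?_, ?_⟩
          · exact ⟨t p0, hp0z, t q0, hq0z, fun h => hPXY _ hp0X (h ▸ hq0Y),
              ((hlabz _ hp0z).1).mpr hp0X, ((hlabz _ hq0z).2).mpr hq0Y,
              by rw [hζdef, e1]; exact hEdSnotM _ ((hEdSc _).mpr ⟨_, hp0X, _, hq0Y, rfl⟩)⟩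
          · intro a haV b hbV hax hby hmem
            rw [hζdef, e1] at hmem
            exact hEdSnotM _
              ((hEdSc _).mpr ⟨a, ((hlabz a haV).1).mp hax, b, ((hlabz b hbV).2).mp hby, rfl⟩) hmem
          · intro e
            rw [mem_join_edges, hζdef, e1]
            constructor
            · rintro (hm | hcr)
              · obtain ⟨hef, u, v, hadj, hne, heq⟩ := (hs.edges e).mp hm
                exact ⟨fun h => hef (Or.inl h), u, v, Or.inl hadj, hne, heq⟩
              · have heS : e ∈ EdS := (hcreated e).mp hcr
                obtain ⟨u, v, hu, hv, hne, heq⟩ := heS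
                exact ⟨hK1 _ ((hcreated e).mp hcr), u, v,
                  Or.inr ⟨fun h => hne (congrArg t h), Or.inl ⟨hu, hv⟩⟩, hne, heq⟩
            · rintro ⟨hef, u, v, hadj, hne, heq⟩
              rcases hadj with hadj | ⟨huv, hlabs⟩
              · by_cases heS : e ∈ EdS
                · exact Or.inr ((hcreated e).mpr heS)
                · refine Or.inl ((hs.edges e).mpr ⟨?_, u, v, hadj, hne, heq⟩)
                  rintro (h | h)
                  · exact hef h
                  · exact heS h
              · refine Or.inr ((hcreated e).mpr ?_)
                rcases hlabs with ⟨h1, h2⟩ | ⟨h1, h2⟩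
                · exact ⟨u, v, h1, h2, hne, heq⟩
                · exact ⟨v, u, h2, h1, hne.symm, heq.trans Sym2.eq_swap⟩
          · intro a
            show a ∈ ζ.eval.verts ↔ _
            constructor
            · intro ha
              rcases (hverts1 a).mp ha with hm | ⟨hXa, -⟩ | ⟨hYa, -⟩
              · obtain ⟨e, he, hae⟩ := (hs.verts a).mp hm
                refine ⟨e, ?_, hae⟩
                rw [mem_join_edges, hζdef, e1]
                exact Or.inl he
              · refine ⟨s(a, t q0), ?_, Sym2.mem_iff.mpr (Or.inl rfl)⟩
                rw [mem_join_edges, hζdef, e1]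
                exact Or.inr ((hcreated _).mpr ((hEdSc _).mpr ⟨a, hXa, _, hq0Y, rfl⟩))
              · refine ⟨s(t p0, a), ?_, Sym2.mem_iff.mpr (Or.inr rfl)⟩
                rw [mem_join_edges, hζdef, e1]
                exact Or.inr ((hcreated _).mpr ((hEdSc _).mpr ⟨_, hp0X, a, hYa, rfl⟩))
            · rintro ⟨e, he, hae⟩
              rw [mem_join_edges, hζdef, e1] at he
              rcases he with he | hcr
              · have := (hs.verts a).mpr ⟨e, he, hae⟩
                exact (hverts1 a).mpr (Or.inl this)
              · obtain ⟨b, c, hbV, hcV, -, -, -, rfl⟩ := hcr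
                rcases Sym2.mem_iff.mp hae with rfl | rfl
                · exact hbV
                · exact hcV
          · intro a ha
            have ha' : a ∈ ζ.eval.verts := ha
            rcases (hverts1 a).mp ha' with hm | ⟨hXa, hnm⟩ | ⟨hYa, hnm⟩
            · obtain ⟨u, htu, hlu⟩ := hs.labs a hm
              refine ⟨u, htu, ?_⟩
              show ψ.eval.lab u = ζ.eval.lab a
              rw [hζdef, lb1 a hm]
              exact hlu
            · obtain ⟨v, hvi, htv⟩ := (hPX a).mp hXa
              have hxi : x' = i := by
                rcases hX2 with h | h
                · exact h
                · exact absurd (h a hXa) hnm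
              refine ⟨v, htv, ?_⟩
              show ψ.eval.lab v = ζ.eval.lab a
              rw [hvi, ((hlabz a ha').1).mpr hXa, hxi]
            · obtain ⟨v, hvj, htv⟩ := (hPY a).mp hYa
              have hyj : y' = j := by
                rcases hY2 with h | h
                · exact h
                · exact absurd (h a hYa) hnm
              refine ⟨v, htv, ?_⟩
              show ψ.eval.lab v = ζ.eval.lab a
              rw [hvj, ((hlabz a ha').2).mpr hYa, hyj]
        | none, ho =>
          set base := GlueExpr.intro (t p0) i with hbasedef
          set l : List (ℕ × Fin k) := ((PX.erase (t p0)).toList.map (fun a => (a, i)))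
            ++ (PY.toList.map (fun a => (a, j))) with hldef
          have hfst : l.map Prod.fst = (PX.erase (t p0)).toList ++ PY.toList := by
            rw [hldef, List.map_append, List.map_map, List.map_map]
            rw [show (Prod.fst ∘ fun a : ℕ => (a, i)) = id from rfl,
              show (Prod.fst ∘ fun a : ℕ => (a, j)) = id from rfl, List.map_id, List.map_id]
          have hfresh : ∀ p ∈ l, p.1 ∉ base.eval.verts := by
            intro p hp
            rcases List.mem_append.mp hp with hp | hp
            · rw [List.mem_map] at hp
              obtain ⟨a, ha, rfl⟩ := hp
              rw [Finset.mem_toList, Finset.mem_erase] at ha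
              show a ∉ ({t p0} : Finset ℕ)
              rw [Finset.mem_singleton]
              exact ha.1
            · rw [List.mem_map] at hp
              obtain ⟨a, ha, rfl⟩ := hp
              rw [Finset.mem_toList] at ha
              show a ∉ ({t p0} : Finset ℕ)
              rw [Finset.mem_singleton]
              rintro rfl
              exact hPXY _ hp0X ha
          have hnd : (l.map Prod.fst).Nodup := by
            rw [hfst]
            refine List.Nodup.append (Finset.nodup_toList _) (Finset.nodup_toList _) ?_
            intro a haX haY
            rw [Finset.mem_toList, Finset.mem_erase] at haX
            rw [Finset.mem_toList] at haY
            exact hPXY a haX.2 haY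
          obtain ⟨w1, r1, v1, e1, lb1, lb2⟩ := addIntros_spec l base trivial trivial hfresh hnd
          set ζ := addIntros l base with hζdef
          have hverts1 : ∀ a, a ∈ ζ.eval.verts ↔ a ∈ PX ∨ a ∈ PY := by
            intro a
            rw [hζdef, v1, Finset.mem_union, hfst, List.toFinset_append, Finset.mem_union,
              Finset.toList_toFinset, Finset.toList_toFinset]
            show a ∈ ({t p0} : Finset ℕ) ∨ _ ↔ _
            rw [Finset.mem_singleton, Finset.mem_erase]
            constructor
            · rintro (rfl | ⟨-, h⟩ | h)
              · exact Or.inl hp0X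
              · exact Or.inl h
              · exact Or.inr h
            · rintro (h | h)
              · by_cases hc : a = t p0
                · exact Or.inl hc
                · exact Or.inr (Or.inl ⟨hc, h⟩)
              · exact Or.inr (Or.inr h)
          have hlabz : ∀ b ∈ ζ.eval.verts,
              (ζ.eval.lab b = i ↔ b ∈ PX) ∧ (ζ.eval.lab b = j ↔ b ∈ PY) := by
            intro b hb
            have hlabi : b ∈ PX → ζ.eval.lab b = i := by
              intro hbX
              by_cases hc : b = t p0
              · subst hc
                rw [hζdef, lb1 _ (Finset.mem_singleton_self _)]
                rfl
              · have hmem : (b, i) ∈ l := by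
                  rw [hldef]
                  refine List.mem_append.mpr (Or.inl ?_)
                  rw [List.mem_map]
                  exact ⟨b, by rw [Finset.mem_toList, Finset.mem_erase]; exact ⟨hc, hbX⟩, rfl⟩
                exact lb2 _ hmem
            have hlabj : b ∈ PY → ζ.eval.lab b = j := by
              intro hbY
              have hmem : (b, j) ∈ l := by
                rw [hldef]
                refine List.mem_append.mpr (Or.inr ?_)
                rw [List.mem_map]
                exact ⟨b, by rw [Finset.mem_toList]; exact hbY, rfl⟩
              exact lb2 _ hmem
            rcases (hverts1 b).mp hb with hbX | hbY
            · exact ⟨⟨fun _ => hbX, fun _ => hlabi hbX⟩,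
                ⟨fun h => absurd ((hlabi hbX).symm.trans h) hij, fun h => (hPXY b hbX h).elim⟩⟩
            · exact ⟨⟨fun h => absurd ((hlabj hbY).symm.trans h).symm hij,
                fun h => (hPXY b h hbY).elim⟩, ⟨fun _ => hbY, fun _ => hlabj hbY⟩⟩
          have hedges1 : ζ.eval.edges = ∅ := by rw [hζdef, e1]; rfl
          have hcreated : ∀ e, (∃ a b, a ∈ ζ.eval.verts ∧ b ∈ ζ.eval.verts ∧ a ≠ b ∧
              ζ.eval.lab a = i ∧ ζ.eval.lab b = j ∧ e = s(a, b)) ↔ e ∈ EdS := by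
            intro e
            constructor
            · rintro ⟨a, b, haV, hbV, hab, hax, hby, rfl⟩
              exact (hEdSc _).mpr ⟨a, ((hlabz a haV).1).mp hax, b, ((hlabz b hbV).2).mp hby, rfl⟩
            · intro he
              obtain ⟨a, ha, b, hb, rfl⟩ := (hEdSc e).mp he
              have haV : a ∈ ζ.eval.verts := (hverts1 a).mpr (Or.inl ha)
              have hbV : b ∈ ζ.eval.verts := (hverts1 b).mpr (Or.inr hb)
              exact ⟨a, b, haV, hbV, fun h => hPXY a ha (h ▸ hb),
                ((hlabz a haV).1).mpr ha, ((hlabz b hbV).2).mpr hb, rfl⟩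
          have hp0z : t p0 ∈ ζ.eval.verts := (hverts1 _).mpr (Or.inl hp0X)
          have hq0z : t q0 ∈ ζ.eval.verts := (hverts1 _).mpr (Or.inr hq0Y)
          refine ⟨some (GlueExpr.join i j ζ), ⟨hij, w1⟩, ⟨r1, ?_, ?_⟩, ?_, ?_, ?_⟩
          · refine ⟨t p0, hp0z, t q0, hq0z, fun h => hPXY _ hp0X (h ▸ hq0Y),
              ((hlabz _ hp0z).1).mpr hp0X, ((hlabz _ hq0z).2).mpr hq0Y, ?_⟩
            rw [hedges1]
            exact Finset.notMem_empty _
          · intro a haV b hbV hax hby hmem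
            rw [hedges1] at hmem
            exact Finset.notMem_empty _ hmem
          · intro e
            rw [mem_join_edges, hedges1]
            constructor
            · rintro (hm | hcr)
              · exact absurd hm (Finset.notMem_empty _)
              · have heS : e ∈ EdS := (hcreated e).mp hcr
                obtain ⟨u, v, hu, hv, hne, heq⟩ := heS
                exact ⟨hK1 _ ((hcreated e).mp hcr), u, v,
                  Or.inr ⟨fun h => hne (congrArg t h), Or.inl ⟨hu, hv⟩⟩, hne, heq⟩
            · rintro ⟨hef, u, v, hadj, hne, heq⟩
              rcases hadj with hadj | ⟨huv, hlabs⟩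
              · by_cases heS : e ∈ EdS
                · exact Or.inr ((hcreated e).mpr heS)
                · exfalso
                  refine ho e ⟨?_, u, v, hadj, hne, heq⟩
                  rintro (h | h)
                  · exact hef h
                  · exact heS h
              · refine Or.inr ((hcreated e).mpr ?_)
                rcases hlabs with ⟨h1, h2⟩ | ⟨h1, h2⟩
                · exact ⟨u, v, h1, h2, hne, heq⟩
                · exact ⟨v, u, h2, h1, hne.symm, heq.trans Sym2.eq_swap⟩
          · intro a
            show a ∈ ζ.eval.verts ↔ _
            constructor
            · intro ha
              rcases (hverts1 a).mp ha with hXa | hYa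
              · refine ⟨s(a, t q0), ?_, Sym2.mem_iff.mpr (Or.inl rfl)⟩
                rw [mem_join_edges, hedges1]
                exact Or.inr ((hcreated _).mpr ((hEdSc _).mpr ⟨a, hXa, _, hq0Y, rfl⟩))
              · refine ⟨s(t p0, a), ?_, Sym2.mem_iff.mpr (Or.inr rfl)⟩
                rw [mem_join_edges, hedges1]
                exact Or.inr ((hcreated _).mpr ((hEdSc _).mpr ⟨_, hp0X, a, hYa, rfl⟩))
            · rintro ⟨e, he, hae⟩
              rw [mem_join_edges, hedges1] at he
              rcases he with he | hcr
              · exact absurd he (Finset.notMem_empty _)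
              · obtain ⟨b, c, hbV, hcV, -, -, -, rfl⟩ := hcr
                rcases Sym2.mem_iff.mp hae with rfl | rfl
                · exact hbV
                · exact hcV
          · intro a ha
            have ha' : a ∈ ζ.eval.verts := ha
            rcases (hverts1 a).mp ha' with hXa | hYa
            · obtain ⟨v, hvi, htv⟩ := (hPX a).mp hXa
              refine ⟨v, htv, ?_⟩
              show ψ.eval.lab v = ζ.eval.lab a
              rw [hvi, ((hlabz a ha').1).mpr hXa]
            · obtain ⟨v, hvj, htv⟩ := (hPY a).mp hYa
              refine ⟨v, htv, ?_⟩
              show ψ.eval.lab v = ζ.eval.lab a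
              rw [hvj, ((hlabz a ha').2).mpr hYa]
      · -- the join is subsumed by the future
        have hsub : ∀ e ∈ EdS, e ∈ Fut := by
          intro e he
          by_contra hc
          exact hkeep ⟨e, he, hc⟩
        have SurvEq : ∀ e, Surv ψ.eval t (Fut ∪ EdS) e ↔
            Surv (FuseExpr.join i j ψ).eval t Fut e := by
          intro e
          constructor
          · rintro ⟨hef, u, v, hadj, hne, heq⟩
            exact ⟨fun h => hef (Or.inl h), u, v, Or.inl hadj, hne, heq⟩
          · rintro ⟨hef, u, v, hadj, hne, heq⟩
            rcases hadj with hadj | ⟨huv, hlabs⟩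
            · refine ⟨?_, u, v, hadj, hne, heq⟩
              rintro (h | h)
              · exact hef h
              · exact hef (hsub _ h)
            · exfalso
              apply hef
              apply hsub
              rw [heq]
              rcases hlabs with ⟨h1, h2⟩ | ⟨h1, h2⟩
              · exact ⟨u, v, h1, h2, hne, rfl⟩
              · exact ⟨v, u, h2, h1, hne.symm, Sym2.eq_swap⟩
        match o, ho with
        | none, ho => exact ⟨none, fun e he => ho e ((SurvEq e).mpr he)⟩
        | some ξ, ⟨hw, hr, hs⟩ =>
          exact ⟨some ξ, hw, hr, fun e => (hs.edges e).trans (SurvEq e), hs.verts, hs.labs⟩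

/-- Build a label-preserving isomorphism from the specification data. -/
theorem build_iso {k : ℕ} (H : LGraph k) (T : TGraph k) (emb : H.V → ℕ)
    (hinj : Function.Injective emb)
    (hv : ∀ a, a ∈ T.verts ↔ ∃ v : H.V, emb v = a)
    (he : ∀ e, e ∈ T.edges ↔ ∃ u v, H.G.Adj u v ∧ e = s(emb u, emb v))
    (hl : ∀ v, T.lab (emb v) = H.lab v) :
    T.LIsoTo H := by
  classical
  let f : H.V → {a // a ∈ T.verts} := fun v => ⟨emb v, (hv _).mpr ⟨v, rfl⟩⟩
  have hbij : Function.Bijective f := by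
    constructor
    · intro a b h
      exact hinj (congrArg Subtype.val h)
    · rintro ⟨a, ha⟩
      obtain ⟨v, rfl⟩ := (hv a).mp ha
      exact ⟨v, rfl⟩
  let E := Equiv.ofBijective f hbij
  have hE : ∀ u, E.symm (f u) = u := fun u => E.symm_apply_apply u
  have hadj : ∀ u v : H.V, T.toSG.Adj (f u) (f v) ↔ H.G.Adj u v := by
    intro u v
    change f u ≠ f v ∧ s((f u).1, (f v).1) ∈ T.edges ↔ H.G.Adj u v
    constructor
    · rintro ⟨hne, hmem⟩
      obtain ⟨u', v', hadj, hsym⟩ := (he _).mp hmem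
      have hsym' : s(emb u, emb v) = s(emb u', emb v') := hsym
      rcases Sym2.eq_iff.mp hsym' with ⟨h1, h2⟩ | ⟨h1, h2⟩
      · rw [hinj h1, hinj h2]; exact hadj
      · rw [hinj h1, hinj h2]; exact hadj.symm
    · intro hadj
      refine ⟨?_, (he _).mpr ⟨u, v, hadj, rfl⟩⟩
      intro hc
      exact hadj.ne (hinj (congrArg Subtype.val hc))
  refine ⟨⟨E.symm, @fun a b => ?_⟩, ?_⟩
  · obtain ⟨u, rfl⟩ := hbij.2 a
    obtain ⟨v, rfl⟩ := hbij.2 b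
    rw [hE, hE]
    exact (hadj u v).symm
  · intro a
    obtain ⟨u, rfl⟩ := hbij.2 a
    show H.lab (E.symm (f u)) = T.lab (f u).1
    rw [hE]
    exact (hl u).symm

end S13

/-- For every fuse-`k`-expression `φ` there exists a *reduced*
glue-`k`-expression `ξ` whose value is label-preservingly isomorphic to the value
of `φ`. -/
theorem exists_reduced_glue_expression {k : ℕ} (φ : FuseExpr k) (hwf : φ.WF) :
    ∃ ξ : GlueExpr k, ξ.WF ∧ ξ.Reduced ∧ ξ.eval.LIsoTo φ.eval := by
  classical
  haveI : Finite φ.eval.V := S13.evalFinite φ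
  haveI : Fintype φ.eval.V := Fintype.ofFinite _
  obtain ⟨v0⟩ := S13.evalNonempty φ
  let emb : φ.eval.V → ℕ := fun v => (Fintype.equivFin φ.eval.V v : ℕ)
  have hinj : Function.Injective emb := by
    intro a b h
    exact (Fintype.equivFin φ.eval.V).injective (Fin.val_injective h)
  have hB : ∀ v w : φ.eval.V, ((∃ w', w' ≠ v ∧ emb w' = emb v) ∨ (fun _ : ℕ => False) (emb v)) →
      φ.eval.lab w = φ.eval.lab v → emb w = emb v := by
    rintro v w (⟨w', hne, he⟩ | hf) hl
    · exact absurd (hinj he) hne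
    · exact hf.elim
  have hA : ∀ u v u' v' : φ.eval.V, φ.eval.lab u' = φ.eval.lab u →
      φ.eval.lab v' = φ.eval.lab v → s(emb u, emb v) ∈ (∅ : Set (Sym2 ℕ)) →
      emb u' ≠ emb v' → s(emb u', emb v') ∈ (∅ : Set (Sym2 ℕ)) := by
    intro u v u' v' _ _ h _
    exact h.elim
  obtain ⟨o, ho⟩ := S13.main φ hwf emb (fun _ => False) ∅ hB hA
  match o, ho with
  | none, ho =>
    have hnoadj : ∀ u v : φ.eval.V, ¬ φ.eval.G.Adj u v := by
      intro u v h
      exact ho _ ⟨Set.notMem_empty _, u, v, h, fun hc => h.ne (hinj hc), rfl⟩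
    let l : List (ℕ × Fin k) :=
      (Finset.univ.erase v0).toList.map (fun v => (emb v, φ.eval.lab v))
    have hfst : l.map Prod.fst = (Finset.univ.erase v0).toList.map emb := by
      simp only [l, List.map_map]
      rfl
    have hfresh : ∀ p ∈ l, p.1 ∉ (GlueExpr.intro (emb v0) (φ.eval.lab v0)).eval.verts := by
      intro p hp
      simp only [l, List.mem_map] at hp
      obtain ⟨v, hv, rfl⟩ := hp
      have : v ≠ v0 := (Finset.mem_erase.mp (Finset.mem_toList.mp hv)).1
      show emb v ∉ ({emb v0} : Finset ℕ)
      simp only [Finset.mem_singleton]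
      exact fun hc => this (hinj hc)
    have hnd : (l.map Prod.fst).Nodup := by
      rw [hfst]
      exact (Finset.nodup_toList _).map hinj
    obtain ⟨w1, r1, v1, e1, lb1, lb2⟩ :=
      S13.addIntros_spec l (GlueExpr.intro (emb v0) (φ.eval.lab v0)) trivial trivial hfresh hnd
    refine ⟨S13.addIntros l (GlueExpr.intro (emb v0) (φ.eval.lab v0)), w1, r1, ?_⟩
    refine S13.build_iso _ _ emb hinj ?_ ?_ ?_
    · intro a
      rw [v1]
      constructor
      · intro h
        rcases Finset.mem_union.mp h with h | h
        · exact ⟨v0, (Finset.mem_singleton.mp h).symm⟩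
        · rw [hfst] at h
          simp only [List.mem_toFinset, List.mem_map, Finset.mem_toList] at h
          obtain ⟨v, _, rfl⟩ := h
          exact ⟨v, rfl⟩
      · rintro ⟨v, rfl⟩
        by_cases hc : v = v0
        · subst hc
          exact Finset.mem_union_left _ (Finset.mem_singleton_self _)
        · refine Finset.mem_union_right _ ?_
          rw [hfst]
          simp only [List.mem_toFinset, List.mem_map, Finset.mem_toList]
          exact ⟨v, Finset.mem_erase.mpr ⟨hc, Finset.mem_univ _⟩, rfl⟩
    · intro e
      rw [e1]
      constructor
      · intro h
        exact absurd h (Finset.notMem_empty _)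
      · rintro ⟨u, v, hadj, -⟩
        exact absurd hadj (hnoadj u v)
    · intro v
      by_cases hc : v = v0
      · subst hc
        rw [lb1 _ (Finset.mem_singleton_self _)]
        rfl
      · have hmem : (emb v, φ.eval.lab v) ∈ l := by
          simp only [l, List.mem_map, Finset.mem_toList]
          exact ⟨v, Finset.mem_erase.mpr ⟨hc, Finset.mem_univ _⟩, rfl⟩
        exact lb2 _ hmem
  | some ξ, ⟨hw, hr, hs⟩ =>
    let isolated : Finset φ.eval.V := Finset.univ.filter (fun v => emb v ∉ ξ.eval.verts)
    let l : List (ℕ × Fin k) := isolated.toList.map (fun v => (emb v, φ.eval.lab v))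
    have hfst : l.map Prod.fst = isolated.toList.map emb := by
      simp only [l, List.map_map]
      rfl
    have hfresh : ∀ p ∈ l, p.1 ∉ ξ.eval.verts := by
      intro p hp
      simp only [l, List.mem_map, Finset.mem_toList] at hp
      obtain ⟨v, hv, rfl⟩ := hp
      exact (Finset.mem_filter.mp hv).2
    have hnd : (l.map Prod.fst).Nodup := by
      rw [hfst]
      exact (Finset.nodup_toList _).map hinj
    obtain ⟨w1, r1, v1, e1, lb1, lb2⟩ := S13.addIntros_spec l ξ hw hr hfresh hnd
    refine ⟨S13.addIntros l ξ, w1, r1, ?_⟩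
    refine S13.build_iso _ _ emb hinj ?_ ?_ ?_
    · intro a
      rw [v1]
      constructor
      · intro h
        rcases Finset.mem_union.mp h with h | h
        · obtain ⟨u, hu, -⟩ := hs.labs a h
          exact ⟨u, hu⟩
        · rw [hfst] at h
          simp only [List.mem_toFinset, List.mem_map, Finset.mem_toList] at h
          obtain ⟨v, _, rfl⟩ := h
          exact ⟨v, rfl⟩
      · rintro ⟨v, rfl⟩
        by_cases hc : emb v ∈ ξ.eval.verts
        · exact Finset.mem_union_left _ hc
        · refine Finset.mem_union_right _ ?_
          rw [hfst]
          simp only [List.mem_toFinset, List.mem_map, Finset.mem_toList]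
          exact ⟨v, Finset.mem_filter.mpr ⟨Finset.mem_univ _, hc⟩, rfl⟩
    · intro e
      rw [e1]
      rw [hs.edges e]
      constructor
      · rintro ⟨-, u, v, hadj, -, rfl⟩
        exact ⟨u, v, hadj, rfl⟩
      · rintro ⟨u, v, hadj, rfl⟩
        exact ⟨Set.notMem_empty _, u, v, hadj, fun hc => hadj.ne (hinj hc), rfl⟩
    · intro v
      by_cases hc : emb v ∈ ξ.eval.verts
      · rw [lb1 _ hc]
        obtain ⟨u, htu, hlu⟩ := hs.labs _ hc
        rw [← hlu, hinj htu]
      · have hmem : (emb v, φ.eval.lab v) ∈ l := by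
          simp only [l, List.mem_map, Finset.mem_toList]
          exact ⟨v, Finset.mem_filter.mpr ⟨Finset.mem_univ _, hc⟩, rfl⟩
        exact lb2 _ hmem
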